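/- arXiv:2504.02741 — 2 statements merged into one kernel-verified Lean document; each statement's English description precedes it below -/
import Mathlib

section
/- Let A_k be the k-fold convolution of x ↦ e^{-2π|x|} with itself, and let r_k be the polynomials defined by the generating series ∑_{k≥0} q^k r_k(X) = e^{(1-√(1-q))X}/√(1-q). Then for every k ≥ 1 and every real x, A_k(x) = e^{-2π|x|} π^{1-k} r_{k-1}(2π|x|). -/
open Real MeasureTheory Complex Polynomial
open Set Filter Topology
open scoped ENNReal NNReal

lemma int_exp_Ioi {b : ℝ} (hb : 0 < b) (a : ℝ) :
    ∫ x in Ioi a, Real.exp (-b*x) = Real.exp (-b*a)/b := by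
  have h : ∀ x ∈ Ici a, HasDerivAt (fun y => -Real.exp (-b*y)/b) (Real.exp (-b*x)) x := by
    intro x _
    have h1 : HasDerivAt (fun y : ℝ => -b*y) (-b) x := by
      simpa using (hasDerivAt_id x).const_mul (-b)
    have h2 := (h1.exp.neg).div_const b
    convert h2 using 1
    · rfl
    · rfl
    · rfl
    · field_simp
  have ht : Tendsto (fun y => -Real.exp (-b*y)/b) atTop (nhds 0) := by
    have : Tendsto (fun y : ℝ => Real.exp (-b*y)) atTop (nhds 0) :=
      tendsto_exp_atBot.comp (tendsto_id.const_mul_atTop_of_neg (neg_neg_iff_pos.2 hb))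
    simpa using (this.neg).div_const b
  have := integral_Ioi_of_hasDerivAt_of_tendsto' h (exp_neg_integrableOn_Ioi a hb) ht
  rw [this]; field_simp; ring

lemma intOn_exp_Iic {c : ℝ} (hc : 0 < c) :
    IntegrableOn (fun y : ℝ => Real.exp (c*y)) (Iic (0:ℝ)) := by
  rw [← (Measure.measurePreserving_neg (volume : Measure ℝ)).integrableOn_comp_preimage
      (Homeomorph.neg ℝ).measurableEmbedding]
  simp only [Function.comp_def, neg_preimage, neg_Iic, neg_zero, mul_neg, ← neg_mul]
  exact (integrableOn_Ici_iff_integrableOn_Ioi).mpr (exp_neg_integrableOn_Ioi 0 hc)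

lemma int_exp_Iic {c : ℝ} (hc : 0 < c) :
    ∫ y in Iic (0:ℝ), Real.exp (c*y) = 1/c := by
  have := integral_comp_neg_Ioi (0:ℝ) (fun y => Real.exp (c*y))
  simp only [neg_zero, mul_neg, ← neg_mul] at this
  rw [← this, int_exp_Ioi hc]
  simp

lemma int_exp_Ioc {c x : ℝ} (hc : c ≠ 0) (hx : 0 ≤ x) :
    ∫ y in Ioc (0:ℝ) x, Real.exp (c*y) = (Real.exp (c*x) - 1)/c := by
  rw [← intervalIntegral.integral_of_le hx]
  have h : ∀ y ∈ uIcc (0:ℝ) x, HasDerivAt (fun y => Real.exp (c*y)/c) (Real.exp (c*y)) y := by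
    intro y _
    have h1 : HasDerivAt (fun y : ℝ => c*y) c y := by
      simpa using (hasDerivAt_id y).const_mul c
    have h2 := h1.exp.div_const c
    convert h2 using 1
    · rfl
    · rfl
    · field_simp
  rw [intervalIntegral.integral_eq_sub_of_hasDerivAt h
    ((Real.continuous_exp.comp (continuous_const.mul continuous_id)).intervalIntegrable 0 x)]
  simp [sub_div]

lemma integrable_exp_abs {b : ℝ} (hb : 0 < b) :
    Integrable (fun x : ℝ => Real.exp (-b * |x|)) := by
  rw [← integrableOn_univ, ← Iic_union_Ioi (a := (0:ℝ)), integrableOn_union]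
  constructor
  · apply (intOn_exp_Iic hb).congr_fun ?_ measurableSet_Iic
    intro y hy
    simp only [mem_Iic] at hy
    show Real.exp (b*y) = Real.exp (-b*|y|)
    rw [abs_of_nonpos hy]; ring_nf
  · apply (exp_neg_integrableOn_Ioi 0 hb).congr_fun ?_ measurableSet_Ioi
    intro y hy
    simp only [mem_Ioi] at hy
    show Real.exp (-b*y) = Real.exp (-b*|y|)
    rw [abs_of_pos hy]

lemma int_exp_abs {b : ℝ} (hb : 0 < b) :
    ∫ x : ℝ, Real.exp (-b * |x|) = 2/b := by
  rw [integral_comp_abs (f := fun x => Real.exp (-b * x))]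
  rw [int_exp_Ioi hb]
  simp [mul_comm]
  ring

lemma conv_exp_nonneg {a b x : ℝ} (ha : 0 < a) (hb : 0 < b) (hab : a ≠ b) (hx : 0 ≤ x) :
    ∫ y : ℝ, Real.exp (-a*|x-y|) * Real.exp (-b*|y|)
      = (2*a*Real.exp (-b*x) - 2*b*Real.exp (-a*x))/(a^2-b^2) := by
  set f : ℝ → ℝ := fun y => Real.exp (-a*|x-y|) * Real.exp (-b*|y|) with hf
  have hapb : (0:ℝ) < a + b := by linarith
  have hamb : a - b ≠ 0 := sub_ne_zero.mpr hab
  -- equalities on pieces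
  have eqIic : EqOn (fun y => Real.exp (-a*x) * Real.exp ((a+b)*y)) f (Iic 0) := by
    intro y hy
    simp only [mem_Iic] at hy
    show Real.exp (-a*x) * Real.exp ((a+b)*y) = Real.exp (-a*|x-y|) * Real.exp (-b*|y|)
    rw [_root_.abs_of_nonneg (by linarith), _root_.abs_of_nonpos hy, ← Real.exp_add, ← Real.exp_add]
    congr 1
    ring
  have eqIoc : EqOn (fun y => Real.exp (-a*x) * Real.exp ((a-b)*y)) f (Ioc 0 x) := by
    intro y hy
    obtain ⟨hy1, hy2⟩ := hy
    show Real.exp (-a*x) * Real.exp ((a-b)*y) = Real.exp (-a*|x-y|) * Real.exp (-b*|y|)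
    rw [_root_.abs_of_nonneg (by linarith), _root_.abs_of_pos hy1, ← Real.exp_add, ← Real.exp_add]
    congr 1
    ring
  have eqIoi : EqOn (fun y => Real.exp (a*x) * Real.exp (-(a+b)*y)) f (Ioi x) := by
    intro y hy
    simp only [mem_Ioi] at hy
    show Real.exp (a*x) * Real.exp (-(a+b)*y) = Real.exp (-a*|x-y|) * Real.exp (-b*|y|)
    rw [_root_.abs_of_nonpos (by linarith), _root_.abs_of_pos (by linarith), ← Real.exp_add, ← Real.exp_add]
    congr 1
    ring
  -- integrability on pieces
  have iIic : IntegrableOn f (Iic 0) :=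
    IntegrableOn.congr_fun ((intOn_exp_Iic hapb).const_mul _) eqIic measurableSet_Iic
  have iIoc : IntegrableOn f (Ioc 0 x) := by
    refine IntegrableOn.congr_fun ?_ eqIoc measurableSet_Ioc
    exact (continuous_const.mul
      (Real.continuous_exp.comp (continuous_const.mul continuous_id))).integrableOn_Ioc
  have iIoi : IntegrableOn f (Ioi x) := by
    refine IntegrableOn.congr_fun ?_ eqIoi measurableSet_Ioi
    have : IntegrableOn (fun y : ℝ => Real.exp (-(a+b)*y)) (Ioi x) :=
      exp_neg_integrableOn_Ioi x hapb
    exact this.const_mul _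
  have iIoi0 : IntegrableOn f (Ioi 0) := by
    rw [← Ioc_union_Ioi_eq_Ioi hx]
    exact iIoc.union iIoi
  -- split
  have split : ∫ y, f y = (∫ y in Iic 0, f y) + ((∫ y in Ioc 0 x, f y) + (∫ y in Ioi x, f y)) := by
    rw [← setIntegral_union (Ioc_disjoint_Ioi le_rfl) measurableSet_Ioi iIoc iIoi,
      Ioc_union_Ioi_eq_Ioi hx,
      ← setIntegral_union (Iic_disjoint_Ioi le_rfl) measurableSet_Ioi iIic iIoi0,
      Iic_union_Ioi, setIntegral_univ]
  -- values
  have v1 : ∫ y in Iic 0, f y = Real.exp (-a*x) * (1/(a+b)) := by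
    rw [← setIntegral_congr_fun measurableSet_Iic eqIic, integral_const_mul, int_exp_Iic hapb]
  have v2 : ∫ y in Ioc 0 x, f y
      = Real.exp (-a*x) * ((Real.exp ((a-b)*x) - 1)/(a-b)) := by
    rw [← setIntegral_congr_fun measurableSet_Ioc eqIoc, integral_const_mul,
      int_exp_Ioc hamb hx]
  have v3 : ∫ y in Ioi x, f y = Real.exp (a*x) * (Real.exp (-(a+b)*x)/(a+b)) := by
    rw [← setIntegral_congr_fun measurableSet_Ioi eqIoi, integral_const_mul,
      int_exp_Ioi hapb]
  have hEne := (Real.exp_pos (-a*x)).ne'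
  have hU : Real.exp ((a-b)*x) = Real.exp (-b*x) / Real.exp (-a*x) := by
    rw [eq_div_iff hEne, ← Real.exp_add]; congr 1; ring
  have hV : Real.exp (-(a+b)*x) = Real.exp (-b*x) * Real.exp (-a*x) := by
    rw [← Real.exp_add]; congr 1; ring
  have hA : Real.exp (a*x) = (Real.exp (-a*x))⁻¹ := by
    rw [← Real.exp_neg]; congr 1; ring
  rw [split, v1, v2, v3, hU, hV, hA]
  have hne1 : a + b ≠ 0 := ne_of_gt hapb
  have hne2 : a^2 - b^2 ≠ 0 := by
    have h : a^2 - b^2 = (a+b)*(a-b) := by ring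
    rw [h]; exact mul_ne_zero hne1 hamb
  field_simp
  ring

lemma conv_exp {a b : ℝ} (ha : 0 < a) (hb : 0 < b) (hab : a ≠ b) (x : ℝ) :
    ∫ y : ℝ, Real.exp (-a*|x-y|) * Real.exp (-b*|y|)
      = (2*a*Real.exp (-b*|x|) - 2*b*Real.exp (-a*|x|))/(a^2-b^2) := by
  rcases le_or_gt 0 x with hx | hx
  · rw [_root_.abs_of_nonneg hx]; exact conv_exp_nonneg ha hb hab hx
  · have key := conv_exp_nonneg ha hb hab (x := -x) (by linarith)
    rw [_root_.abs_of_nonpos hx.le]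
    rw [← key]
    have := MeasureTheory.integral_neg_eq_self
      (fun y => Real.exp (-a*|x-y|) * Real.exp (-b*|y|)) (volume : Measure ℝ)
    rw [← this]
    congr 1
    ext y
    rw [_root_.abs_neg, show x - -y = -(-x - y) by ring, _root_.abs_neg]

/-- `Ak n` is the `(n+1)`-fold self-convolution of `x ↦ e^{-2π|x|}`,
so `Ak 0 = A₁` and `Ak n = A_{n+1}` in the paper's notation. -/
noncomputable def Ak : ℕ → ℝ → ℝ
  | 0, x => Real.exp (-2 * π * |x|)
  | (n + 1), x => ∫ y : ℝ, Ak n (x - y) * Real.exp (-2 * π * |y|)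

lemma Ak_zero (x : ℝ) : Ak 0 x = Real.exp (-2 * π * |x|) := rfl

lemma Ak_succ (n : ℕ) (x : ℝ) : Ak (n+1) x = ∫ y : ℝ, Ak n (x - y) * Ak 0 y := rfl

lemma A1_cont : Continuous (Ak 0) := by
  have : Continuous fun x : ℝ => -2 * π * |x| :=
    (continuous_const.mul continuous_abs)
  exact Real.continuous_exp.comp this

lemma A1_eq : Ak 0 = fun x : ℝ => Real.exp (-(2*π) * |x|) := by
  funext x; rw [Ak_zero]; congr 1; ring

lemma A1_integrable : Integrable (Ak 0) := by
  rw [A1_eq]; exact integrable_exp_abs (by positivity)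

lemma A1_int : ∫ y : ℝ, Ak 0 y = π⁻¹ := by
  rw [A1_eq, int_exp_abs (by positivity)]
  rw [div_eq_iff (by positivity)]
  field_simp

lemma A1_nonneg (x : ℝ) : 0 ≤ Ak 0 x := (Real.exp_pos _).le

lemma A1_le_one (x : ℝ) : Ak 0 x ≤ 1 := by
  rw [Ak_zero, Real.exp_le_one_iff]
  have : 0 ≤ |x| := abs_nonneg x
  nlinarith [Real.pi_pos]

lemma Ak_conv (n : ℕ) :
    Ak (n+1) = MeasureTheory.convolution (Ak n) (Ak 0) (ContinuousLinearMap.mul ℝ ℝ) volume := by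
  funext x
  rw [Ak_succ]
  have h := MeasureTheory.integral_sub_left_eq_self
    (fun y => Ak n y * Ak 0 (x - y)) (volume : Measure ℝ) x
  simp only [sub_sub_cancel] at h
  rw [h]
  simp [MeasureTheory.convolution, ContinuousLinearMap.mul_apply']

lemma Ak_props (n : ℕ) : Continuous (Ak n) ∧ Integrable (Ak n) ∧
    (∀ x, 0 ≤ Ak n x) ∧ (∀ x, Ak n x ≤ (π⁻¹)^n) := by
  induction n with
  | zero => exact ⟨A1_cont, A1_integrable, A1_nonneg, by simpa using A1_le_one⟩
  | succ n ih =>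
    obtain ⟨hcont, hint, hnn, hbd⟩ := ih
    have hbdd : BddAbove (range fun x => ‖Ak 0 x‖) := by
      refine ⟨1, ?_⟩
      rintro z ⟨x, rfl⟩
      show ‖Ak 0 x‖ ≤ 1
      rw [Real.norm_eq_abs, _root_.abs_of_nonneg (A1_nonneg x)]
      exact A1_le_one x
    have hintegrand : ∀ x : ℝ, Integrable (fun y => Ak n (x - y) * Ak 0 y) := by
      intro x
      refine MeasureTheory.Integrable.bdd_mul (c := (π⁻¹)^n) A1_integrable
        ((hcont.comp (continuous_const.sub continuous_id)).aestronglyMeasurable) ?_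
      exact Eventually.of_forall (fun y => by
        rw [Real.norm_eq_abs, _root_.abs_of_nonneg (hnn _)]; exact hbd _)
    refine ⟨?_, ?_, ?_, ?_⟩
    · rw [Ak_conv]
      exact BddAbove.continuous_convolution_right_of_integrable _ hbdd hint A1_cont
    · rw [Ak_conv]
      exact MeasureTheory.Integrable.integrable_convolution _ hint A1_integrable
    · intro x
      rw [Ak_succ]
      exact integral_nonneg fun y => mul_nonneg (hnn _) (A1_nonneg _)
    · intro x
      rw [Ak_succ]
      have step : ∫ y : ℝ, Ak n (x - y) * Ak 0 y ≤ ∫ y : ℝ, (π⁻¹)^n * Ak 0 y := by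
        refine integral_mono (hintegrand x) (A1_integrable.const_mul _) ?_
        intro y
        exact mul_le_mul_of_nonneg_right (hbd _) (A1_nonneg _)
      calc ∫ y : ℝ, Ak n (x - y) * Ak 0 y ≤ ∫ y : ℝ, (π⁻¹)^n * Ak 0 y := step
        _ = (π⁻¹)^n * π⁻¹ := by rw [integral_const_mul, A1_int]
        _ = (π⁻¹)^(n+1) := by rw [pow_succ]

lemma Ak_cont (n : ℕ) : Continuous (Ak n) := (Ak_props n).1
lemma Ak_integrable (n : ℕ) : Integrable (Ak n) := (Ak_props n).2.1
lemma Ak_nonneg (n : ℕ) (x : ℝ) : 0 ≤ Ak n x := (Ak_props n).2.2.1 x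
lemma Ak_le (n : ℕ) (x : ℝ) : Ak n x ≤ (π⁻¹)^n := (Ak_props n).2.2.2 x

lemma Ak_tsum {t : ℝ} (ht0 : 0 < t) (ht1 : t < 1) (x₀ : ℝ) :
    ∑' k : ℕ, t^k * π^k * Ak k x₀
      = Real.exp (-(2*π*Real.sqrt (1-t))*|x₀|) / Real.sqrt (1-t) := by
  have hπ := Real.pi_pos
  set s : ℝ := Real.sqrt (1-t) with hs
  have hs0 : 0 < s := Real.sqrt_pos.mpr (by linarith)
  have hs2 : s^2 = 1 - t := Real.sq_sqrt (by linarith)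
  have hs1 : s < 1 := by nlinarith
  have hsne1 : s ≠ 1 := ne_of_lt hs1
  set Gh : ℝ → ℝ := fun x => Real.exp (-(2*π*s)*|x|) / s with hGh
  have hGhcont : Continuous Gh :=
    (Real.continuous_exp.comp (continuous_const.mul _root_.continuous_abs)).div_const s
  have hGhnn : ∀ x, 0 ≤ Gh x := fun x => div_nonneg (Real.exp_pos _).le hs0.le
  have hGhle : ∀ x, Gh x ≤ s⁻¹ := by
    intro x
    rw [hGh]
    simp only
    rw [div_eq_mul_inv]
    have h1 : Real.exp (-(2*π*s)*|x|) ≤ 1 := by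
      rw [Real.exp_le_one_iff, neg_mul]
      have h2 : 0 ≤ 2*π*s*|x| := by positivity
      linarith
    nlinarith [inv_pos.mpr hs0, Real.exp_pos (-(2*π*s)*|x|), h1]
  have htermnn : ∀ k (x : ℝ), 0 ≤ t^k * π^k * Ak k x := by
    intro k x
    have := Ak_nonneg k x
    positivity
  have htermle : ∀ k (x : ℝ), t^k * π^k * Ak k x ≤ t^k := by
    intro k x
    calc t^k * π^k * Ak k x ≤ t^k * π^k * (π⁻¹)^k := by
          apply mul_le_mul_of_nonneg_left (Ak_le k x) (by positivity)
      _ = t^k * (π^k * (π^k)⁻¹) := by rw [← inv_pow]; ring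
      _ = t^k := by rw [mul_inv_cancel₀ (by positivity), mul_one]
  have hgeo : Summable (fun k : ℕ => t^k) := summable_geometric_of_lt_one ht0.le ht1
  have hsummable : ∀ x, Summable (fun k => t^k * π^k * Ak k x) := fun x =>
    Summable.of_nonneg_of_le (fun k => htermnn k x) (fun k => htermle k x) hgeo
  set G : ℝ → ℝ := fun x => ∑' k : ℕ, t^k * π^k * Ak k x with hG
  have hGcont : Continuous G := by
    refine continuous_tsum (fun k => ?_) hgeo (fun k x => ?_)
    · exact (continuous_const.mul (Ak_cont k))
    · rw [Real.norm_eq_abs, _root_.abs_of_nonneg (htermnn k x)]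
      exact htermle k x
  have hGnn : ∀ x, 0 ≤ G x := fun x => tsum_nonneg (fun k => htermnn k x)
  have hGle : ∀ x, G x ≤ (1-t)⁻¹ := by
    intro x
    have := Summable.tsum_le_tsum (fun k => htermle k x) (hsummable x) hgeo
    rwa [tsum_geometric_of_lt_one ht0.le ht1] at this
  have hintG : ∀ x, Integrable (fun y => G (x-y) * Ak 0 y) := by
    intro x
    refine MeasureTheory.Integrable.bdd_mul (c := (1-t)⁻¹) A1_integrable
      ((hGcont.comp (continuous_const.sub continuous_id)).aestronglyMeasurable) ?_
    exact Eventually.of_forall (fun y => by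
      rw [Real.norm_eq_abs, _root_.abs_of_nonneg (hGnn _)]; exact hGle _)
  have hintGh : ∀ x, Integrable (fun y => Gh (x-y) * Ak 0 y) := by
    intro x
    refine MeasureTheory.Integrable.bdd_mul (c := s⁻¹) A1_integrable
      ((hGhcont.comp (continuous_const.sub continuous_id)).aestronglyMeasurable) ?_
    exact Eventually.of_forall (fun y => by
      rw [Real.norm_eq_abs, _root_.abs_of_nonneg (hGhnn _)]; exact hGhle _)
  have hGeq : ∀ x, G x = Ak 0 x + (t*π) * ∫ y, G (x-y) * Ak 0 y := by
    intro x
    have h1 : G x = Ak 0 x + ∑' k, t^(k+1) * π^(k+1) * Ak (k+1) x := by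
      rw [hG]
      simp only
      rw [Summable.tsum_eq_zero_add (hsummable x)]
      simp
    have h2 : ∀ k : ℕ, t^(k+1) * π^(k+1) * Ak (k+1) x
        = ∫ y, (t*π) * ((t^k * π^k * Ak k (x-y)) * Ak 0 y) := by
      intro k
      rw [Ak_succ, ← integral_const_mul]
      congr 1
      funext y
      ring
    have haesm : ∀ k : ℕ, AEStronglyMeasurable
        (fun y => (t*π) * ((t^k * π^k * Ak k (x-y)) * Ak 0 y)) volume := by
      intro k
      apply Continuous.aestronglyMeasurable
      exact continuous_const.mul (((continuous_const.mul
        ((Ak_cont k).comp (continuous_const.sub continuous_id)))).mul (Ak_cont 0))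
    have hptle : ∀ k : ℕ, ∀ y : ℝ, ‖(t*π) * ((t^k * π^k * Ak k (x-y)) * Ak 0 y)‖
        ≤ (t^(k+1) * π) * Ak 0 y := by
      intro k y
      have hnn : 0 ≤ (t*π) * ((t^k * π^k * Ak k (x-y)) * Ak 0 y) := by
        have h1 := htermnn k (x-y); have h2 := A1_nonneg y; positivity
      rw [Real.norm_eq_abs, _root_.abs_of_nonneg hnn]
      calc (t*π) * ((t^k * π^k * Ak k (x-y)) * Ak 0 y)
          ≤ (t*π) * (t^k * Ak 0 y) := by
            apply mul_le_mul_of_nonneg_left ?_ (by positivity)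
            exact mul_le_mul_of_nonneg_right (htermle k (x-y)) (A1_nonneg y)
        _ = (t^(k+1) * π) * Ak 0 y := by ring
    have hlbound : ∀ k : ℕ,
        (∫⁻ y, ‖(t*π) * ((t^k * π^k * Ak k (x-y)) * Ak 0 y)‖₊ ∂volume)
          ≤ ENNReal.ofReal (t^(k+1)) := by
      intro k
      have step1 : (∫⁻ y, ‖(t*π) * ((t^k * π^k * Ak k (x-y)) * Ak 0 y)‖₊ ∂volume)
          ≤ ∫⁻ y, ENNReal.ofReal ((t^(k+1) * π) * Ak 0 y) ∂volume := by
        apply lintegral_mono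
        intro y
        show (‖t * π * (t ^ k * π ^ k * Ak k (x - y) * Ak 0 y)‖₊ : ℝ≥0∞)
          ≤ ENNReal.ofReal (t ^ (k + 1) * π * Ak 0 y)
        rw [← ENNReal.ofReal_coe_nnreal, coe_nnnorm]
        exact ENNReal.ofReal_le_ofReal (hptle k y)
      have step2 : ∫⁻ y, ENNReal.ofReal ((t^(k+1) * π) * Ak 0 y) ∂volume
          = ENNReal.ofReal (∫ y, (t^(k+1) * π) * Ak 0 y) := by
        rw [MeasureTheory.ofReal_integral_eq_lintegral_ofReal
          (A1_integrable.const_mul _)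
          (Eventually.of_forall (fun y => by have := A1_nonneg y; positivity))]
      have step3 : (∫ y, (t^(k+1) * π) * Ak 0 y) = t^(k+1) := by
        rw [integral_const_mul, A1_int, mul_assoc, mul_inv_cancel₀ (ne_of_gt hπ), mul_one]
      rw [step2, step3] at step1
      exact step1
    have hsum_ne_top : ∑' k : ℕ,
        (∫⁻ y, ‖(t*π) * ((t^k * π^k * Ak k (x-y)) * Ak 0 y)‖₊ ∂volume) ≠ ⊤ := by
      apply ne_top_of_le_ne_top ?_ (ENNReal.tsum_le_tsum hlbound)
      rw [← ENNReal.ofReal_tsum_of_nonneg (fun k => by positivity)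
        (by simpa [pow_succ] using hgeo.mul_right t)]
      exact ENNReal.ofReal_ne_top
    calc G x = Ak 0 x + ∑' k, t^(k+1) * π^(k+1) * Ak (k+1) x := h1
      _ = Ak 0 x + ∑' k, ∫ y, (t*π) * ((t^k * π^k * Ak k (x-y)) * Ak 0 y) := by
          rw [tsum_congr h2]
      _ = Ak 0 x + ∫ y, ∑' k, (t*π) * ((t^k * π^k * Ak k (x-y)) * Ak 0 y) := by
          rw [MeasureTheory.integral_tsum haesm hsum_ne_top]
      _ = Ak 0 x + ∫ y, (t*π) * ((∑' k : ℕ, t^k * π^k * Ak k (x-y)) * Ak 0 y) := by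
          congr 1
          refine integral_congr_ae (Eventually.of_forall (fun y => ?_))
          show (∑' k : ℕ, t * π * (t^k * π^k * Ak k (x-y) * Ak 0 y))
            = (t*π) * ((∑' k : ℕ, t^k * π^k * Ak k (x-y)) * Ak 0 y)
          rw [tsum_mul_left, tsum_mul_right]
      _ = Ak 0 x + (t*π) * ∫ y, G (x-y) * Ak 0 y := by
          simp only [hG]
          rw [integral_const_mul]
  have hGheq : ∀ x, Gh x = Ak 0 x + (t*π) * ∫ y, Gh (x-y) * Ak 0 y := by
    intro x
    have ha : (0:ℝ) < 2*π*s := by positivity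
    have hb : (0:ℝ) < 2*π := by positivity
    have hab : 2*π*s ≠ 2*π := by
      intro h
      have h' : 2*π*(s-1) = 0 := by linarith
      rcases mul_eq_zero.mp h' with h'' | h''
      · nlinarith
      · exact hsne1 (by linarith)
    have hconv := conv_exp ha hb hab x
    have hrw : (fun y => Gh (x-y) * Ak 0 y)
        = fun y => s⁻¹ * (Real.exp (-(2*π*s)*|x-y|) * Real.exp (-(2*π)*|y|)) := by
      funext y
      rw [hGh, A1_eq]
      simp only
      ring
    rw [hrw, integral_const_mul, hconv]
    rw [hGh, A1_eq]
    simp only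
    have hd : (2*π*s)^2 - (2*π)^2 = -(4*π^2*t) := by linear_combination (4*π^2) * hs2
    rw [hd]
    field_simp
    ring
  have hDint : ∀ x, Integrable (fun y => (G (x-y) - Gh (x-y)) * Ak 0 y) := by
    intro x
    have hfe : (fun y => (G (x-y) - Gh (x-y)) * Ak 0 y)
        = fun y => G (x-y) * Ak 0 y - Gh (x-y) * Ak 0 y := by funext y; ring
    rw [hfe]
    exact (hintG x).sub (hintGh x)
  have hDeq : ∀ x, G x - Gh x = (t*π) * ∫ y, (G (x-y) - Gh (x-y)) * Ak 0 y := by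
    intro x
    have hsplit : ∫ y, (G (x-y) - Gh (x-y)) * Ak 0 y
        = (∫ y, G (x-y) * Ak 0 y) - ∫ y, Gh (x-y) * Ak 0 y := by
      rw [← integral_sub (hintG x) (hintGh x)]
      congr 1; funext y; ring
    calc G x - Gh x = (Ak 0 x + (t*π) * ∫ y, G (x-y) * Ak 0 y)
          - (Ak 0 x + (t*π) * ∫ y, Gh (x-y) * Ak 0 y) := by rw [← hGeq x, ← hGheq x]
      _ = (t*π) * ((∫ y, G (x-y) * Ak 0 y) - ∫ y, Gh (x-y) * Ak 0 y) := by ring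
      _ = (t*π) * ∫ y, (G (x-y) - Gh (x-y)) * Ak 0 y := by rw [hsplit]
  set C : ℝ := (1-t)⁻¹ + s⁻¹ with hC
  have hDle : ∀ x, |G x - Gh x| ≤ C := by
    intro x
    rw [sub_eq_add_neg]
    refine (abs_add_le _ _).trans ?_
    rw [abs_neg, _root_.abs_of_nonneg (hGnn x), _root_.abs_of_nonneg (hGhnn x)]
    exact add_le_add (hGle x) (hGhle x)
  have hiter : ∀ n : ℕ, ∀ x, |G x - Gh x| ≤ t^n * C := by
    intro n
    induction n with
    | zero => intro x; simpa using hDle x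
    | succ n ih =>
      intro x
      rw [hDeq x, abs_mul, _root_.abs_of_nonneg (by positivity : (0:ℝ) ≤ t*π)]
      have habs : |∫ y, (G (x-y) - Gh (x-y)) * Ak 0 y|
          ≤ ∫ y, |(G (x-y) - Gh (x-y)) * Ak 0 y| := by
        have := MeasureTheory.norm_integral_le_integral_norm
            (μ := volume) (fun y => (G (x - y) - Gh (x - y)) * Ak 0 y)
        simp only [Real.norm_eq_abs] at this
        exact this
      have hmono : (∫ y, |(G (x-y) - Gh (x-y)) * Ak 0 y|) ≤ ∫ y, (t^n * C) * Ak 0 y := by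
        refine integral_mono (hDint x).abs (A1_integrable.const_mul _) ?_
        intro y
        show |(G (x - y) - Gh (x - y)) * Ak 0 y| ≤ t ^ n * C * Ak 0 y
        rw [abs_mul, _root_.abs_of_nonneg (A1_nonneg y)]
        exact mul_le_mul_of_nonneg_right (ih _) (A1_nonneg y)
      have hval : (∫ y, (t^n * C) * Ak 0 y) = t^n * C * π⁻¹ := by
        rw [integral_const_mul, A1_int]
      calc (t*π) * |∫ y, (G (x-y) - Gh (x-y)) * Ak 0 y|
          ≤ (t*π) * (t^n * C * π⁻¹) := by
            apply mul_le_mul_of_nonneg_left ((habs.trans hmono).trans_eq hval) (by positivity)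
        _ = t^(n+1) * C := by field_simp; ring
  have hfinal : G x₀ = Gh x₀ := by
    have h0 : |G x₀ - Gh x₀| ≤ 0 := by
      have htend : Tendsto (fun n : ℕ => t^n * C) atTop (𝓝 0) := by
        simpa using (tendsto_pow_atTop_nhds_zero_of_lt_one ht0.le ht1).mul_const C
      exact ge_of_tendsto htend (Eventually.of_forall (fun n => hiter n x₀))
    have := abs_nonpos_iff.mp h0
    linarith [sub_eq_zero.mp this]
  exact hfinal

lemma coeff_zero (a : ℕ → ℝ) (C R : ℝ) (hC : 0 ≤ C) (hR : 1 ≤ R)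
    (hb : ∀ k, |a k| ≤ C * R^k)
    (hz : ∀ t : ℝ, 0 < t → t < (2*R)⁻¹ → ∑' k, t^k * a k = 0) :
    ∀ n, a n = 0 := by
  have hR0 : 0 < R := lt_of_lt_of_le one_pos hR
  intro n
  induction n using Nat.strong_induction_on with
  | _ n ih =>
  have key : ∀ t : ℝ, 0 < t → t < (2*R)⁻¹ → |a n| ≤ 2*C*R^(n+1)*t := by
    intro t ht0 ht1
    have htR : t * R < 1/2 := by
      have := (mul_lt_mul_of_pos_right ht1 hR0)
      calc t * R < (2*R)⁻¹ * R := this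
        _ = 1/2 := by field_simp
    have htR0 : 0 ≤ t * R := by positivity
    have hsum : Summable (fun k => t^k * a k) := by
      apply Summable.of_norm_bounded (g := fun k => C * (t*R)^k)
        ((summable_geometric_of_lt_one htR0 (by linarith)).mul_left C)
      intro k
      rw [Real.norm_eq_abs, abs_mul, _root_.abs_of_nonneg (pow_nonneg ht0.le k)]
      calc t^k * |a k| ≤ t^k * (C * R^k) :=
            mul_le_mul_of_nonneg_left (hb k) (pow_nonneg ht0.le k)
        _ = C * (t*R)^k := by rw [mul_pow]; ring
    have hsum2 : Summable (fun k => t^k * a (k + n)) := by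
      apply Summable.of_norm_bounded (g := fun k => (C * R^n) * (t*R)^k)
        ((summable_geometric_of_lt_one htR0 (by linarith)).mul_left _)
      intro k
      rw [Real.norm_eq_abs, abs_mul, _root_.abs_of_nonneg (pow_nonneg ht0.le k)]
      calc t^k * |a (k+n)| ≤ t^k * (C * R^(k+n)) :=
            mul_le_mul_of_nonneg_left (hb _) (pow_nonneg ht0.le k)
        _ = (C * R^n) * (t*R)^k := by rw [mul_pow, pow_add]; ring
    have hfin : (∑ i ∈ Finset.range n, t^i * a i) = 0 :=
      Finset.sum_eq_zero fun i hi => by rw [ih i (Finset.mem_range.mp hi), mul_zero]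
    have htail : (∑' k, t^(k+n) * a (k+n)) = 0 := by
      have hsplit := Summable.sum_add_tsum_nat_add n hsum
      rw [hfin, zero_add] at hsplit
      rw [hsplit, hz t ht0 ht1]
    have htail2 : (∑' k, t^k * a (k+n)) = 0 := by
      have : (∑' k, t^(k+n) * a (k+n)) = t^n * ∑' k, t^k * a (k+n) := by
        rw [← tsum_mul_left]
        congr 1
        funext k
        rw [pow_add]
        ring
      rw [this] at htail
      rcases mul_eq_zero.mp htail with h | h
      · exact absurd h (pow_ne_zero n (ne_of_gt ht0))
      · exact h
    have hzero : a n = -∑' k, t^(k+1) * a (k+1+n) := by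
      have := Summable.tsum_eq_zero_add hsum2
      rw [htail2] at this
      simp only [pow_zero, one_mul, zero_add] at this
      have h2 : (∑' k, t^(k+1) * a (k+1+n)) = ∑' (b : ℕ), t ^ (b + 1) * a (b + 1 + n) := rfl
      linarith [this]
    have hbound : |∑' k, t^(k+1) * a (k+1+n)| ≤ (C*R^(n+1)*t) * (1 - t*R)⁻¹ := by
      have hhs : HasSum (fun k => (C*R^(n+1)*t) * (t*R)^k) ((C*R^(n+1)*t) * (1-t*R)⁻¹) :=
        (hasSum_geometric_of_lt_one htR0 (by linarith)).mul_left _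
      have hpt : ∀ k : ℕ, ‖t^(k+1) * a (k+1+n)‖ ≤ (C*R^(n+1)*t) * (t*R)^k := by
        intro k
        rw [Real.norm_eq_abs, abs_mul, _root_.abs_of_nonneg (pow_nonneg ht0.le _)]
        calc t^(k+1) * |a (k+1+n)| ≤ t^(k+1) * (C * R^(k+1+n)) :=
              mul_le_mul_of_nonneg_left (hb _) (pow_nonneg ht0.le _)
          _ = (C*R^(n+1)*t) * (t*R)^k := by rw [pow_add, pow_add, mul_pow, pow_add]; ring
      have := tsum_of_norm_bounded hhs hpt
      rwa [Real.norm_eq_abs] at this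
    have hinv : (1 - t*R)⁻¹ ≤ 2 := by
      have h12 : (1:ℝ)/2 ≤ 1 - t*R := by linarith
      have := inv_anti₀ (by norm_num : (0:ℝ) < 1/2) h12
      simpa using this
    calc |a n| = |∑' k, t^(k+1) * a (k+1+n)| := by rw [hzero, abs_neg]
      _ ≤ (C*R^(n+1)*t) * (1 - t*R)⁻¹ := hbound
      _ ≤ (C*R^(n+1)*t) * 2 := by
          apply mul_le_mul_of_nonneg_left hinv (by positivity)
      _ = 2*C*R^(n+1)*t := by ring
  have hle : ∀ ε : ℝ, 0 < ε → |a n| ≤ ε := by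
    intro ε hε
    set D : ℝ := 2*C*R^(n+1) with hD
    have hD0 : 0 ≤ D := by positivity
    set t : ℝ := min ((4*R)⁻¹) (ε / (D + 1)) with ht
    have ht0 : 0 < t := lt_min (by positivity) (by positivity)
    have ht1 : t < (2*R)⁻¹ := by
      apply lt_of_le_of_lt (min_le_left _ _)
      rw [inv_lt_inv₀ (by positivity) (by positivity)]
      linarith
    have h1 := key t ht0 ht1
    have h2 : D * t ≤ D * (ε / (D + 1)) :=
      mul_le_mul_of_nonneg_left (min_le_right _ _) hD0
    have h3 : D * (ε / (D + 1)) ≤ ε := by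
      rw [div_eq_mul_inv]
      have h4 : D * (ε * (D+1)⁻¹) = ε * (D * (D+1)⁻¹) := by ring
      rw [h4]
      have h5 : D * (D+1)⁻¹ ≤ 1 := by
        rw [mul_inv_le_iff₀ (by positivity)]
        linarith
      nlinarith
    calc |a n| ≤ 2*C*R^(n+1)*t := h1
      _ = D * t := by rw [hD]
      _ ≤ ε := le_trans h2 h3
  have : |a n| ≤ 0 := by
    by_contra h
    push_neg at h
    linarith [hle (|a n|/2) (by linarith)]
  exact abs_nonpos_iff.mp (this)

lemma aeval_coe (p : Polynomial ℚ) (X : ℝ) :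
    Polynomial.aeval ((X : ℝ) : ℂ) p = ((Polynomial.aeval X p : ℝ) : ℂ) := by
  have := Polynomial.aeval_algHom_apply ((Complex.ofRealAm).restrictScalars ℚ) X p
  simpa using this

lemma cpow_half_eq (t : ℝ) (ht : t < 1) :
    ((1:ℂ) - (t:ℂ)) ^ ((1:ℂ)/2) = ((Real.sqrt (1-t) : ℝ) : ℂ) := by
  have h1 : ((1:ℂ) - (t:ℂ)) = ((1 - t : ℝ) : ℂ) := by push_cast; ring
  have h2 : ((1:ℂ)/2) = (((1/2 : ℝ) : ℝ) : ℂ) := by norm_num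
  rw [h1, h2, ← Complex.ofReal_cpow (by linarith)]
  rw [Real.sqrt_eq_rpow]

theorem Ak_eq_exp_mul_poly (r : ℕ → Polynomial ℚ)
    (hr : ∀ (X : ℝ) (q : ℂ), ‖q‖ < 1 →
      ∑' k : ℕ, q ^ k * Polynomial.aeval (X : ℂ) (r k)
        = Complex.exp ((1 - (1 - q) ^ ((1 : ℂ) / 2)) * X) / (1 - q) ^ ((1 : ℂ) / 2)) :
    ∀ (n : ℕ) (x : ℝ),
      Ak n x = Real.exp (-2 * π * |x|) * (π ^ n)⁻¹
        * Polynomial.aeval (2 * π * |x|) (r n) := by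
  intro n x
  have hπ := Real.pi_pos
  set X : ℝ := 2 * π * |x| with hX
  have hX0 : 0 ≤ X := by positivity
  set w : ℕ → ℝ := fun k => Polynomial.aeval X (r k) with hw
  set u : ℕ → ℝ := fun k => π^k * Real.exp X * Ak k x with hu
  -- complex identity specialized to real q = t
  have hreal : ∀ t : ℝ, 0 < t → t < 1 →
      (∑' k : ℕ, t^k * w k)
        = Real.exp ((1 - Real.sqrt (1-t)) * X) / Real.sqrt (1-t) := by
    intro t ht0 ht1
    have hnorm : ‖(t:ℂ)‖ < 1 := by
      rw [Complex.norm_real, Real.norm_eq_abs, _root_.abs_of_pos ht0]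
      exact ht1
    have hc := hr X (t:ℂ) hnorm
    have hL : (∑' k : ℕ, (t:ℂ)^k * Polynomial.aeval ((X:ℝ):ℂ) (r k))
        = (((∑' k : ℕ, t^k * w k) : ℝ) : ℂ) := by
      rw [Complex.ofReal_tsum]
      apply tsum_congr
      intro k
      rw [aeval_coe, hw]
      push_cast
      ring
    have hs0 : 0 < Real.sqrt (1-t) := Real.sqrt_pos.mpr (by linarith)
    have hR : Complex.exp ((1 - ((1:ℂ) - (t:ℂ)) ^ ((1:ℂ)/2)) * (X:ℂ))
          / ((1:ℂ) - (t:ℂ)) ^ ((1:ℂ)/2)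
        = (((Real.exp ((1 - Real.sqrt (1-t)) * X) / Real.sqrt (1-t)) : ℝ) : ℂ) := by
      rw [cpow_half_eq t ht1]
      rw [show ((1:ℂ) - ((Real.sqrt (1-t) : ℝ) : ℂ)) * ((X:ℝ):ℂ)
          = (((1 - Real.sqrt (1-t)) * X : ℝ) : ℂ) by push_cast; ring]
      rw [← Complex.ofReal_exp, ← Complex.ofReal_div]
    rw [hL, hR] at hc
    exact_mod_cast hc
  -- the Ak-side identity
  have hAkreal : ∀ t : ℝ, 0 < t → t < 1 →
      (∑' k : ℕ, t^k * u k)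
        = Real.exp ((1 - Real.sqrt (1-t)) * X) / Real.sqrt (1-t) := by
    intro t ht0 ht1
    have h1 : (∑' k : ℕ, t^k * u k)
        = Real.exp X * ∑' k : ℕ, t^k * π^k * Ak k x := by
      rw [← tsum_mul_left]
      apply tsum_congr
      intro k
      rw [hu]
      ring
    rw [h1, Ak_tsum ht0 ht1 x]
    rw [mul_div_assoc', ← Real.exp_add]
    congr 2
    rw [hX]
    ring
  -- bound on u
  have hu_le : ∀ k, |u k| ≤ Real.exp X := by
    intro k
    rw [hu]
    have h1 : 0 ≤ π^k * Real.exp X * Ak k x := by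
      have := Ak_nonneg k x; positivity
    rw [_root_.abs_of_nonneg h1]
    calc π^k * Real.exp X * Ak k x ≤ π^k * Real.exp X * (π⁻¹)^k := by
          apply mul_le_mul_of_nonneg_left (Ak_le k x) (by positivity)
      _ = Real.exp X * (π^k * (π^k)⁻¹) := by rw [← inv_pow]; ring
      _ = Real.exp X := by rw [mul_inv_cancel₀ (by positivity), mul_one]
  -- summability of the complex series at any |q|<1, transfered to w
  have hw_sum : Summable (fun k => ((1:ℝ)/2)^k * w k) := by
    have h12 : (0:ℝ) < 1/2 := by norm_num
    have hnorm : ‖((1/2 : ℝ) : ℂ)‖ < 1 := by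
      rw [Complex.norm_real, Real.norm_eq_abs, _root_.abs_of_pos h12]
      norm_num
    have hc := hr X ((1/2 : ℝ) : ℂ) hnorm
    have hden : ((1:ℂ) - ((1/2 : ℝ) : ℂ)) ^ ((1:ℂ)/2) ≠ 0 := by
      rw [Ne, Complex.cpow_eq_zero_iff]
      push_neg
      intro h
      exfalso
      have h2 : ((1:ℂ) - ((1/2 : ℝ) : ℂ)) = (((1:ℝ)/2 : ℝ) : ℂ) := by push_cast; ring
      rw [h2, Complex.ofReal_eq_zero] at h
      norm_num at h
    have hne : (∑' k : ℕ, ((1/2 : ℝ) : ℂ)^k * Polynomial.aeval ((X:ℝ):ℂ) (r k)) ≠ 0 := by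
      rw [hc]
      exact div_ne_zero (Complex.exp_ne_zero _) hden
    have hsumC : Summable
        (fun k : ℕ => ((1/2 : ℝ) : ℂ)^k * Polynomial.aeval ((X:ℝ):ℂ) (r k)) := by
      by_contra hns
      exact hne (tsum_eq_zero_of_not_summable hns)
    have heq : (fun k : ℕ => ((1/2 : ℝ) : ℂ)^k * Polynomial.aeval ((X:ℝ):ℂ) (r k))
        = fun k : ℕ => (((((1:ℝ)/2)^k * w k : ℝ)) : ℂ) := by
      funext k
      rw [aeval_coe, hw]
      push_cast
      ring
    rw [heq] at hsumC
    exact Complex.summable_ofReal.mp hsumC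
  -- bound on w
  obtain ⟨B, hB0, hBle⟩ : ∃ B : ℝ, 0 ≤ B ∧ ∀ k, |w k| ≤ B * 2^k := by
    have habs : Summable (fun k => |((1:ℝ)/2)^k * w k|) :=
      summable_abs_iff.mpr hw_sum
    refine ⟨∑' k, |((1:ℝ)/2)^k * w k|, tsum_nonneg (fun k => abs_nonneg _), ?_⟩
    intro k
    have h1 : |((1:ℝ)/2)^k * w k| ≤ ∑' j, |((1:ℝ)/2)^j * w j| :=
      Summable.le_tsum habs k (fun j _ => abs_nonneg _)
    rw [abs_mul, _root_.abs_of_nonneg (by positivity : (0:ℝ) ≤ ((1:ℝ)/2)^k)] at h1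
    have hpow : ((1:ℝ)/2)^k * 2^k = 1 := by
      rw [← mul_pow]; norm_num
    calc |w k| = (((1:ℝ)/2)^k * |w k|) * 2^k := by
          rw [mul_comm (((1:ℝ)/2)^k) (|w k|), mul_assoc, hpow, mul_one]
      _ ≤ (∑' j, |((1:ℝ)/2)^j * w j|) * 2^k :=
          mul_le_mul_of_nonneg_right h1 (by positivity)
  -- apply uniqueness
  have hzn : w n - u n = 0 := by
    refine coeff_zero (fun k => w k - u k) (B + Real.exp X) 2
      (by positivity) (by norm_num) ?_ ?_ n
    · intro k
      have h1 : |w k - u k| ≤ |w k| + |u k| := by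
        rw [sub_eq_add_neg]
        refine (abs_add_le _ _).trans ?_
        rw [abs_neg]
      have h2 : (1:ℝ) ≤ 2^k := one_le_pow₀ (by norm_num)
      calc |w k - u k| ≤ |w k| + |u k| := h1
        _ ≤ B * 2^k + Real.exp X := add_le_add (hBle k) (hu_le k)
        _ ≤ B * 2^k + Real.exp X * 2^k := by
            nlinarith [Real.exp_pos X]
        _ = (B + Real.exp X) * 2^k := by ring
    · intro t ht0 ht1
      have ht1' : t < 1 := by
        have : ((2:ℝ)*2)⁻¹ < 1 := by norm_num
        linarith
      have hsum_u : Summable (fun k => t^k * u k) := by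
        apply Summable.of_norm_bounded (g := fun k => Real.exp X * t^k)
          ((summable_geometric_of_lt_one ht0.le ht1').mul_left _)
        intro k
        rw [Real.norm_eq_abs, abs_mul, _root_.abs_of_nonneg (pow_nonneg ht0.le k)]
        calc t^k * |u k| ≤ t^k * Real.exp X :=
              mul_le_mul_of_nonneg_left (hu_le k) (pow_nonneg ht0.le k)
          _ = Real.exp X * t^k := by ring
      have hsum_w : Summable (fun k => t^k * w k) := by
        apply Summable.of_norm_bounded (g := fun k => B * (2*t)^k)
        · apply Summable.mul_left
          apply summable_geometric_of_lt_one (by positivity)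
          have : ((2:ℝ)*2)⁻¹ = 1/4 := by norm_num
          rw [this] at ht1
          linarith
        · intro k
          rw [Real.norm_eq_abs, abs_mul, _root_.abs_of_nonneg (pow_nonneg ht0.le k)]
          calc t^k * |w k| ≤ t^k * (B * 2^k) :=
                mul_le_mul_of_nonneg_left (hBle k) (pow_nonneg ht0.le k)
            _ = B * (2*t)^k := by rw [mul_pow]; ring
      have hcongr : (fun k : ℕ => t^k * (w k - u k))
          = fun k : ℕ => t^k * w k - t^k * u k := by
        funext k; ring
      rw [hcongr, Summable.tsum_sub hsum_w hsum_u, hreal t ht0 ht1', hAkreal t ht0 ht1', sub_self]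
  -- conclude
  have hwu : Polynomial.aeval X (r n) = π^n * Real.exp X * Ak n x := by
    have h1 : w n = u n := sub_eq_zero.mp hzn
    simpa [hw, hu] using h1
  have hexp : Real.exp (-2 * π * |x|) = (Real.exp X)⁻¹ := by
    rw [← Real.exp_neg]
    congr 1
    rw [hX]
    ring
  rw [hexp, hwu]
  have hpine : (π:ℝ)^n ≠ 0 := by positivity
  have hEne : Real.exp X ≠ 0 := (Real.exp_pos X).ne'
  field_simp
end

section
/- Let F be holomorphic on the upper half-plane ℂ⁺ of the form F(z) = ((z²+1)^m/(2πi)) ∫_ℝ ((1+tz)/(t−z)) dμ(t)/(1+t²)^{m+1} + iQ(z), where μ is a real signed measure with ∫(1+t²)^{-(m+1)}d|μ| < ∞ and Q is a real polynomial of degree ≤ 2m+1 with leading coefficient a_{2m+1}. Then lim_{y→∞} y^{-(2m+1)} Re F(iy) = (−1)^{m+1} a_{2m+1}; in particular the leading coefficient a_{2m+1} is uniquely determined by F. -/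
open Real MeasureTheory Complex Filter Polynomial

private lemma ratio_im_eq (t y : ℝ) (hy : 0 < y) :
    (((1:ℂ) + t * (Complex.I * y)) / ((t:ℂ) - Complex.I * y)).im
      = y * (1 + t^2) / (t^2 + y^2) := by
  rw [Complex.div_im]
  simp [Complex.normSq_apply]
  ring

private lemma ratio_norm_le (t y : ℝ) (hy : 1 ≤ y) :
    ‖((1:ℂ) + t * (Complex.I * y)) / ((t:ℂ) - Complex.I * y)‖ ≤ 1 + y := by
  rw [norm_div]
  have h2 : ‖(t:ℂ) - Complex.I * y‖ = Real.sqrt (t^2 + y^2) := by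
    rw [Complex.norm_def, Complex.normSq_apply]
    simp
    ring_nf
  have h1 : ‖(1:ℂ) + t * (Complex.I * y)‖ = Real.sqrt (1 + t^2*y^2) := by
    rw [Complex.norm_def, Complex.normSq_apply]
    simp
    ring_nf
  rw [h1, h2, div_le_iff₀ (by positivity)]
  calc Real.sqrt (1 + t^2*y^2) ≤ Real.sqrt ((1+y)^2 * (t^2+y^2)) := by
        apply Real.sqrt_le_sqrt
        nlinarith
    _ = (1+y) * Real.sqrt (t^2+y^2) := by
        rw [Real.sqrt_mul (by positivity), Real.sqrt_sq (by positivity)]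

private lemma cInt_meas (y : ℝ) (m : ℕ) : Measurable (fun t : ℝ =>
    ((1 + t * (Complex.I * y)) / ((t : ℂ) - Complex.I * y)) * (((1 + (t : ℂ) ^ 2) ^ (m + 1))⁻¹)) := by
  apply Measurable.mul
  · apply Measurable.div
    · fun_prop
    · fun_prop
  · fun_prop

private lemma inv_pow_cast (t : ℝ) (m : ℕ) :
    ((1 + (t:ℂ)^2)^(m+1))⁻¹ = ((((1+t^2)^(m+1) : ℝ))⁻¹ : ℂ) := by
  push_cast
  ring

private lemma cInt_integrable (y : ℝ) (hy : 1 ≤ y) (m : ℕ) (μ : MeasureTheory.Measure ℝ)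
    (hμ : MeasureTheory.Integrable (fun t : ℝ => ((1 + t ^ 2) ^ (m + 1))⁻¹) μ) :
    MeasureTheory.Integrable (fun t : ℝ =>
      ((1 + t * (Complex.I * y)) / ((t : ℂ) - Complex.I * y)) * (((1 + (t : ℂ) ^ 2) ^ (m + 1))⁻¹)) μ := by
  apply MeasureTheory.Integrable.mono' (g := fun t : ℝ => (1+y) * ((1 + t ^ 2) ^ (m + 1))⁻¹)
    (hμ.const_mul (1+y)) ((cInt_meas y m).aestronglyMeasurable)
  filter_upwards with t
  rw [norm_mul]
  have h1 : ‖((1 + (t:ℂ)^2)^(m+1))⁻¹‖ = ((1+t^2)^(m+1))⁻¹ := by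
    have hcast : ((1 + (t:ℂ)^2)^(m+1)) = (((1+t^2)^(m+1) : ℝ) : ℂ) := by push_cast; ring
    rw [norm_inv, hcast, Complex.norm_real, Real.norm_eq_abs,
      _root_.abs_of_nonneg (by positivity)]
  rw [h1]
  have := ratio_norm_le t y hy
  have hpos : (0:ℝ) ≤ (((1+t^2))^(m+1))⁻¹ := by positivity
  calc ‖(1 + ↑t * (Complex.I * ↑y)) / ((t:ℂ) - Complex.I * ↑y)‖ * ((1+t^2)^(m+1))⁻¹
      ≤ (1+y) * ((1+t^2)^(m+1))⁻¹ := by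
        apply mul_le_mul_of_nonneg_right this hpos

private lemma cInt_im (t y : ℝ) (hy : 0 < y) (m : ℕ) :
    (((1 + t * (Complex.I * y)) / ((t : ℂ) - Complex.I * y)) * (((1 + (t : ℂ) ^ 2) ^ (m + 1))⁻¹)).im
      = y * (((1+t^2)^(m+1))⁻¹ * ((1+t^2)/(t^2+y^2))) := by
  have hcast : ((1 + (t:ℂ)^2)^(m+1))⁻¹ = Complex.ofReal (((1+t^2)^(m+1))⁻¹) := by
    push_cast; ring
  rw [hcast, Complex.mul_im]
  simp only [Complex.ofReal_im, Complex.ofReal_re, mul_zero, add_zero]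
  rw [ratio_im_eq t y hy]
  ring

private lemma dct_zero (m : ℕ) (μ : MeasureTheory.Measure ℝ)
    (hμ : MeasureTheory.Integrable (fun t : ℝ => ((1+t^2)^(m+1))⁻¹) μ) :
    Tendsto (fun y : ℝ => ∫ t, ((1+t^2)^(m+1))⁻¹ * ((1+t^2)/(t^2+y^2)) ∂μ) atTop (nhds 0) := by
  have h0 : (0:ℝ) = ∫ t : ℝ, (0:ℝ) ∂μ := by simp
  rw [h0]
  apply MeasureTheory.tendsto_integral_filter_of_dominated_convergence
    (bound := fun t : ℝ => ((1+t^2)^(m+1))⁻¹)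
  · filter_upwards with y
    apply Measurable.aestronglyMeasurable
    fun_prop
  · filter_upwards [eventually_ge_atTop (1:ℝ)] with y hy
    filter_upwards with t
    have h1 : (0:ℝ) < 1 + t^2 := by positivity
    have h2 : (0:ℝ) < t^2 + y^2 := by positivity
    rw [Real.norm_eq_abs, _root_.abs_of_nonneg (by positivity)]
    have hle : (1+t^2)/(t^2+y^2) ≤ 1 := by
      rw [div_le_one h2]
      nlinarith
    calc ((1+t^2)^(m+1))⁻¹ * ((1+t^2)/(t^2+y^2)) ≤ ((1+t^2)^(m+1))⁻¹ * 1 := by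
          apply mul_le_mul_of_nonneg_left hle (by positivity)
      _ = ((1+t^2)^(m+1))⁻¹ := by ring
  · exact hμ
  · filter_upwards with t
    have : Tendsto (fun y : ℝ => (1+t^2)/(t^2+y^2)) atTop (nhds 0) := by
      apply Tendsto.div_atTop tendsto_const_nhds
      apply tendsto_atTop_add_const_left
      exact tendsto_pow_atTop (by norm_num)
    have := this.const_mul (((1+t^2)^(m+1))⁻¹)
    simpa using this

private lemma re_div_twoPiI (r : ℝ) (W : ℂ) :
    ((↑r / (2*↑π*Complex.I)) * W).re = r * W.im / (2*π) := by
  have h : ((r:ℂ) / (2*↑π*Complex.I)) = ↑(r/(2*π)) * (-Complex.I) := by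
    have hπ : (π:ℂ) ≠ 0 := by exact_mod_cast Real.pi_ne_zero
    field_simp
    ring_nf
    simp [Complex.ext_iff]
    have hπr : π ≠ 0 := Real.pi_ne_zero
    field_simp
  rw [h, mul_assoc, Complex.re_ofReal_mul]
  simp [Complex.mul_re]
  ring

private lemma poly_re_sum (m : ℕ) (Q : Polynomial ℝ) (hQ : Q.degree ≤ 2*m+1) (y : ℝ) :
    (Complex.I * Polynomial.aeval (Complex.I * (y:ℂ)) (Q.map (algebraMap ℝ ℂ))).re
      = ∑ k ∈ Finset.range (2*m+2), Q.coeff k * (Complex.I^(k+1)).re * y^k := by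
  have hQn : Q.natDegree ≤ 2*m+1 := Polynomial.natDegree_le_iff_degree_le.mpr (by exact_mod_cast hQ)
  have hdeg : (Q.map (algebraMap ℝ ℂ)).natDegree < 2*m+2 := by
    have h2 : (Q.map (algebraMap ℝ ℂ)).natDegree ≤ Q.natDegree := Polynomial.natDegree_map_le
    omega
  have haev : Polynomial.aeval (Complex.I * (y:ℂ)) (Q.map (algebraMap ℝ ℂ))
      = Polynomial.eval (Complex.I * (y:ℂ)) (Q.map (algebraMap ℝ ℂ)) := by
    rw [Polynomial.aeval_def, Polynomial.eval₂_eq_eval_map]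
    simp
  rw [haev, Polynomial.eval_eq_sum_range' hdeg, Finset.mul_sum, Complex.re_sum]
  apply Finset.sum_congr rfl
  intro k _
  have hc : (Q.map (algebraMap ℝ ℂ)).coeff k = ((Q.coeff k : ℝ) : ℂ) := by
    simp [Polynomial.coeff_map]
  rw [hc]
  have : Complex.I * (((Q.coeff k : ℝ) : ℂ) * (Complex.I * (y:ℂ))^k)
      = ((Q.coeff k : ℝ) : ℂ) * ((y:ℝ)^k : ℝ) * Complex.I^(k+1) := by
    push_cast
    ring
  rw [this, ← Complex.ofReal_mul, Complex.re_ofReal_mul]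
  ring

private lemma poly_part_tendsto (n : ℕ) (c : ℕ → ℝ) :
    Tendsto (fun y : ℝ => (∑ k ∈ Finset.range (n+1), c k * y^k) / y^n) atTop
      (nhds (c n)) := by
  have h1 : ∀ y : ℝ, (∑ k ∈ Finset.range (n+1), c k * y^k) / y^n
      = ∑ k ∈ Finset.range (n+1), c k * (y^k / y^n) := by
    intro y
    rw [Finset.sum_div]
    exact Finset.sum_congr rfl fun k _ => by ring
  simp only [h1]
  have h2 : Tendsto (fun y : ℝ => ∑ k ∈ Finset.range (n+1), c k * (y^k / y^n)) atTop
      (nhds (∑ k ∈ Finset.range (n+1), if k = n then c k else 0)) := by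
    apply tendsto_finset_sum
    intro k hk
    rcases eq_or_ne k n with rfl | hne
    · simp only [if_pos rfl]
      have he : (fun y : ℝ => (c k : ℝ)) =ᶠ[atTop] fun y => c k * (y^k / y^k) := by
        filter_upwards [eventually_gt_atTop 0] with y hy
        rw [div_self (by positivity)]; ring
      exact Tendsto.congr' he tendsto_const_nhds
    · simp only [if_neg hne]
      have hk' : k < n := by
        have := Finset.mem_range.mp hk
        omega
      have := tendsto_pow_div_pow_atTop_zero (𝕜 := ℝ) hk'
      simpa using (this.const_mul (c k))
  convert h2 using 1
  rw [Finset.sum_ite_eq' (Finset.range (n+1)) n c]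
  simp

theorem leading_coeff_determined (m : ℕ) (s : MeasureTheory.SignedMeasure ℝ)
    (hint : MeasureTheory.Integrable (fun t : ℝ => ((1 + t ^ 2) ^ (m + 1))⁻¹)
      s.totalVariation)
    (Q : Polynomial ℝ) (hQ : Q.degree ≤ 2 * m + 1)
    (F : ℂ → ℂ)
    (hF : ∀ z : ℂ, 0 < z.im →
      F z = ((z ^ 2 + 1) ^ m / (2 * π * Complex.I)) *
          ((∫ t : ℝ, ((1 + t * z) / ((t : ℂ) - z)) * (((1 + (t : ℂ) ^ 2) ^ (m + 1))⁻¹)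
              ∂s.toJordanDecomposition.posPart)
            - ∫ t : ℝ, ((1 + t * z) / ((t : ℂ) - z)) * (((1 + (t : ℂ) ^ 2) ^ (m + 1))⁻¹)
              ∂s.toJordanDecomposition.negPart)
        + Complex.I * Polynomial.aeval z (Q.map (algebraMap ℝ ℂ))) :
    Tendsto (fun y : ℝ => (F (Complex.I * y)).re / y ^ (2 * m + 1)) atTop
      (nhds ((-1 : ℝ) ^ (m + 1) * Q.coeff (2 * m + 1))) := by
  set pos := s.toJordanDecomposition.posPart with hposdef
  set neg := s.toJordanDecomposition.negPart with hnegdef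
  have hTV : s.totalVariation = pos + neg := rfl
  have hintpos : MeasureTheory.Integrable (fun t : ℝ => ((1 + t ^ 2) ^ (m + 1))⁻¹) pos :=
    hint.mono_measure (by rw [hTV]; exact MeasureTheory.Measure.le_add_right le_rfl)
  have hintneg : MeasureTheory.Integrable (fun t : ℝ => ((1 + t ^ 2) ^ (m + 1))⁻¹) neg :=
    hint.mono_measure (by rw [hTV]; exact MeasureTheory.Measure.le_add_left le_rfl)
  set g : ℝ → ℝ → ℝ := fun y t => ((1+t^2)^(m+1))⁻¹ * ((1+t^2)/(t^2+y^2)) with hg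
  set c : ℕ → ℝ := fun k => Q.coeff k * (Complex.I^(k+1)).re with hc
  -- the target function eventually equals the explicit form
  have key : ∀ᶠ y : ℝ in atTop,
      (F (Complex.I * y)).re / y ^ (2 * m + 1)
        = ((1 - y^2)^m / y^(2*m) / (2*π)) * ((∫ t, g y t ∂pos) - ∫ t, g y t ∂neg)
          + (∑ k ∈ Finset.range (2*m+2), c k * y^k) / y^(2*m+1) := by
    filter_upwards [eventually_ge_atTop (1:ℝ)] with y hy
    have hy0 : (0:ℝ) < y := lt_of_lt_of_le one_pos hy
    have him : (0:ℝ) < (Complex.I * (y:ℂ)).im := by simpa using hy0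
    rw [hF _ him]
    have hsq : ((Complex.I * (y:ℂ))^2 + 1)^m = (((1 - y^2 : ℝ) : ℂ))^m := by
      rw [mul_pow, Complex.I_sq]
      push_cast
      ring_nf
    have hIp := cInt_integrable y hy m pos hintpos
    have hIn := cInt_integrable y hy m neg hintneg
    have himIp : (∫ t : ℝ, ((1 + t * (Complex.I * y)) / ((t : ℂ) - Complex.I * y)) *
        (((1 + (t : ℂ) ^ 2) ^ (m + 1))⁻¹) ∂pos).im = y * ∫ t, g y t ∂pos := by
      have h1 := @integral_im ℝ _ pos ℂ _ _ hIp
      simp only [RCLike.im_to_complex] at h1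
      rw [← h1]
      have h2 : ∀ t : ℝ, (((1 + t * (Complex.I * y)) / ((t : ℂ) - Complex.I * y)) *
          (((1 + (t : ℂ) ^ 2) ^ (m + 1))⁻¹)).im = y * g y t := fun t => cInt_im t y hy0 m
      simp only [h2]
      rw [MeasureTheory.integral_const_mul]
    have himIn : (∫ t : ℝ, ((1 + t * (Complex.I * y)) / ((t : ℂ) - Complex.I * y)) *
        (((1 + (t : ℂ) ^ 2) ^ (m + 1))⁻¹) ∂neg).im = y * ∫ t, g y t ∂neg := by
      have h1 := @integral_im ℝ _ neg ℂ _ _ hIn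
      simp only [RCLike.im_to_complex] at h1
      rw [← h1]
      have h2 : ∀ t : ℝ, (((1 + t * (Complex.I * y)) / ((t : ℂ) - Complex.I * y)) *
          (((1 + (t : ℂ) ^ 2) ^ (m + 1))⁻¹)).im = y * g y t := fun t => cInt_im t y hy0 m
      simp only [h2]
      rw [MeasureTheory.integral_const_mul]
    rw [Complex.add_re, hsq, ← Complex.ofReal_pow, re_div_twoPiI, Complex.sub_im,
      himIp, himIn, poly_re_sum m Q hQ y]
    rw [add_div]
    congr 1
    have hyne : y ≠ 0 := ne_of_gt hy0
    field_simp
    ring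
  -- limits
  have lim1 : Tendsto (fun y : ℝ => ((1 - y^2)^m / y^(2*m) / (2*π)) *
      ((∫ t, g y t ∂pos) - ∫ t, g y t ∂neg)) atTop (nhds 0) := by
    have hA : Tendsto (fun y : ℝ => (1 - y^2)^m / y^(2*m) / (2*π)) atTop
        (nhds ((-1:ℝ)^m / (2*π))) := by
      have h1 : Tendsto (fun y : ℝ => (1/y^2 - 1)) atTop (nhds (-1:ℝ)) := by
        have := (tendsto_pow_atTop (n := 2) (by norm_num)).inv_tendsto_atTop (𝕜 := ℝ)
        have h2 := this.sub_const 1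
        simpa [one_div] using h2
      have h3 : Tendsto (fun y : ℝ => (1/y^2 - 1)^m) atTop (nhds ((-1:ℝ)^m)) := h1.pow m
      have h4 : (fun y : ℝ => (1/y^2 - 1)^m) =ᶠ[atTop] fun y => (1 - y^2)^m / y^(2*m) := by
        filter_upwards [eventually_gt_atTop (0:ℝ)] with y hy
        have hdiv : 1/y^2 - 1 = (1 - y^2)/y^2 := by field_simp
        rw [hdiv, div_pow, ← pow_mul, Nat.mul_comm 2 m, Nat.mul_comm m 2]
      exact (Tendsto.congr' h4 h3).div_const (2*π)
    have hB : Tendsto (fun y : ℝ => (∫ t, g y t ∂pos) - ∫ t, g y t ∂neg) atTop (nhds 0) := by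
      have := (dct_zero m pos hintpos).sub (dct_zero m neg hintneg)
      simpa using this
    have := hA.mul hB
    simpa using this
  have lim2 : Tendsto (fun y : ℝ => (∑ k ∈ Finset.range (2*m+2), c k * y^k) / y^(2*m+1)) atTop
      (nhds ((-1 : ℝ) ^ (m + 1) * Q.coeff (2 * m + 1))) := by
    have := poly_part_tendsto (2*m+1) c
    have hcval : c (2*m+1) = (-1 : ℝ) ^ (m + 1) * Q.coeff (2 * m + 1) := by
      have hI : (Complex.I^(2*m+1+1)) = ((-1:ℂ))^(m+1) := by
        rw [show 2*m+1+1 = 2*(m+1) by ring, pow_mul, Complex.I_sq]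
      rw [hc]
      simp only [hI]
      have : ((-1:ℂ))^(m+1) = (((-1:ℝ)^(m+1) : ℝ) : ℂ) := by push_cast; ring
      rw [this, Complex.ofReal_re]
      ring
    rw [hcval] at this
    exact this
  have := lim1.add lim2
  rw [zero_add] at this
  exact Tendsto.congr' (EventuallyEq.symm key) this
end
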